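/- For non-negative integers n and k with 0 ≤ k ≤ n, C(2n+1,n-k)·(C(2n,n-k) − C(2n,n-k-1)) = C(2n,n+k)^2 − C(2n,n+k+1)^2. -/
import Mathlib


/-- Binomial coefficient with integer arguments, zero outside `0 ≤ k ≤ n`. -/
def C (n k : ℤ) : ℤ := if 0 ≤ k ∧ k ≤ n then (n.toNat.choose k.toNat : ℤ) else 0

theorem stmt_15 (n k : ℕ) (h : k ≤ n) :
    C (2 * (n : ℤ) + 1) ((n : ℤ) - k) *
        (C (2 * (n : ℤ)) ((n : ℤ) - k) - C (2 * (n : ℤ)) ((n : ℤ) - k - 1)) =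
      C (2 * (n : ℤ)) ((n : ℤ) + k) ^ 2 - C (2 * (n : ℤ)) ((n : ℤ) + k + 1) ^ 2 := by
  have key1 : (2 * n + 1).choose (n - k) = (2 * n).choose (n + k) + (2 * n).choose (n + k + 1) := by
    have h1 : (2 * n + 1).choose (n - k) = (2 * n + 1).choose (n + k + 1) := by
      have := Nat.choose_symm (n := 2 * n + 1) (k := n + k + 1) (by omega)
      rw [show 2 * n + 1 - (n + k + 1) = n - k by omega] at this
      exact this
    rw [h1, show n + k + 1 = (n + k) + 1 from rfl, Nat.choose_succ_succ]
  have key2 : (2 * n).choose (n - k) = (2 * n).choose (n + k) := by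
    have := Nat.choose_symm (n := 2 * n) (k := n + k) (by omega)
    rw [show 2 * n - (n + k) = n - k by omega] at this
    exact this
  have e1 : C (2 * (n : ℤ) + 1) ((n : ℤ) - k)
      = ((2 * n + 1).choose (n - k) : ℤ) := by
    rw [C, if_pos ⟨by omega, by omega⟩,
      show (2 * (n : ℤ) + 1).toNat = 2 * n + 1 by omega,
      show ((n : ℤ) - k).toNat = n - k by omega]
  have e2 : C (2 * (n : ℤ)) ((n : ℤ) - k) = ((2 * n).choose (n - k) : ℤ) := by
    rw [C, if_pos ⟨by omega, by omega⟩,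
      show (2 * (n : ℤ)).toNat = 2 * n by omega,
      show ((n : ℤ) - k).toNat = n - k by omega]
  have e4 : C (2 * (n : ℤ)) ((n : ℤ) + k) = ((2 * n).choose (n + k) : ℤ) := by
    rw [C, if_pos ⟨by omega, by omega⟩,
      show (2 * (n : ℤ)).toNat = 2 * n by omega,
      show ((n : ℤ) + k).toNat = n + k by omega]
  have e5 : C (2 * (n : ℤ)) ((n : ℤ) + k + 1) = ((2 * n).choose (n + k + 1) : ℤ) := by
    by_cases hk : k < n
    · rw [C, if_pos ⟨by omega, by omega⟩,
        show (2 * (n : ℤ)).toNat = 2 * n by omega,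
        show ((n : ℤ) + k + 1).toNat = n + k + 1 by omega]
    · have hkn : k = n := by omega
      subst hkn
      rw [C, if_neg (by omega), Nat.choose_eq_zero_of_lt (by omega)]
      simp
  have e3 : C (2 * (n : ℤ)) ((n : ℤ) - k - 1) = ((2 * n).choose (n + k + 1) : ℤ) := by
    by_cases hk : k < n
    · rw [C, if_pos ⟨by omega, by omega⟩,
        show (2 * (n : ℤ)).toNat = 2 * n by omega,
        show ((n : ℤ) - k - 1).toNat = n - k - 1 by omega]
      have := Nat.choose_symm (n := 2 * n) (k := n + k + 1) (by omega)
      rw [show 2 * n - (n + k + 1) = n - k - 1 by omega] at this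
      rw [← this]
    · have hkn : k = n := by omega
      subst hkn
      rw [C, if_neg (by omega), Nat.choose_eq_zero_of_lt (by omega)]
      simp
  rw [e1, e2, e3, e4, e5, key1, key2]
  push_cast
  ring
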